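/- Properties of the exponentially weighted test function Φ^{λ,γ}: fix T, λ > 0, γ ≥ 0 and ξ, ζ ∈ C¹([0,T]; ℝ) with ξ₀ = ζ₀ = 0, and assume λ Δ_T^{γ,+} < 1. Then Φ^{λ,γ}(x,y,t) := λ e^{γt} e_g(x,y) / (1 − λ ∫₀^t e^{γs}(ξ̇_s − ζ̇_s) ds) is well defined and is a classical (pointwise differentiable) solution, on {(x,y) ∈ ℝ^N × ℝ^N : d_g(x,y) < Υ} × [0,T], of ∂_t w − γw − (g^{-1}(x) D_x w, D_x w) ξ̇ + (g^{-1}(y) D_y w, D_y w) ζ̇ = 0. -/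

import Mathlib

open Set MeasureTheory
noncomputable section

abbrev EV (N : ℕ) := EuclideanSpace ℝ (Fin N)

def quadForm {N : ℕ} (A : Matrix (Fin N) (Fin N) ℝ) (v w : EV N) : ℝ :=
  ∑ i, ∑ j, A i j * v i * w j

def energy {N : ℕ} (g : EV N → Matrix (Fin N) (Fin N) ℝ) (x y : EV N) : ℝ :=
  sInf { e : ℝ | ∃ γ : ℝ → EV N, ContDiffOn ℝ 1 γ (Icc (0:ℝ) 1) ∧ γ 0 = x ∧ γ 1 = y ∧
      e = ∫ t in (0:ℝ)..(1:ℝ), (1/4 : ℝ) * quadForm (g (γ t)) (deriv γ t) (deriv γ t) }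

def dg {N : ℕ} (g : EV N → Matrix (Fin N) (Fin N) ℝ) (x y : EV N) : ℝ :=
  Real.sqrt (energy g x y)

def ginv {N : ℕ} (g : EV N → Matrix (Fin N) (Fin N) ℝ) (x : EV N) : Matrix (Fin N) (Fin N) ℝ :=
  (g x)⁻¹

def UniformlyElliptic {N : ℕ} (g : EV N → Matrix (Fin N) (Fin N) ℝ) (C : ℝ) : Prop :=
  0 < C ∧ ∀ (x w : EV N), (1/C) * ‖w‖^2 ≤ quadForm (g x) w w ∧ quadForm (g x) w w ≤ C * ‖w‖^2

def DeltaGammaPlus (ξ ζ : ℝ → ℝ) (γ T : ℝ) : ℝ :=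
  sSup ((fun t => ∫ s in (0:ℝ)..t, Real.exp (γ * s) * (deriv ξ s - deriv ζ s)) '' Icc (0:ℝ) T)

/-- The exponentially weighted test function
`Φ^{λ,γ}(x,y,t) = λ e^{γt} e_g(x,y) / (1 − λ∫₀ᵗ e^{γs}(ξ̇_s − ζ̇_s) ds)`. -/
def PhiLG {N : ℕ} (g : EV N → Matrix (Fin N) (Fin N) ℝ) (ξ ζ : ℝ → ℝ) (lam γ : ℝ)
    (x y : EV N) (t : ℝ) : ℝ :=
  lam * Real.exp (γ * t) * energy g x y /
    (1 - lam * ∫ s in (0:ℝ)..t, Real.exp (γ * s) * (deriv ξ s - deriv ζ s))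

section Aux

variable {N : ℕ}

lemma quadForm_nonneg {g : EV N → Matrix (Fin N) (Fin N) ℝ} {C : ℝ}
    (hell : UniformlyElliptic g C) (x w : EV N) : 0 ≤ quadForm (g x) w w := by
  have h := (hell.2 x w).1
  have hC := hell.1
  have h0 : 0 ≤ (1/C) * ‖w‖^2 := by positivity
  linarith

lemma quadForm_smul (A : Matrix (Fin N) (Fin N) ℝ) (c : ℝ) (v : EV N) :
    quadForm A (c • v) (c • v) = c^2 * quadForm A v v := by
  unfold quadForm
  rw [Finset.mul_sum]
  refine Finset.sum_congr rfl fun i _ => ?_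
  rw [Finset.mul_sum]
  refine Finset.sum_congr rfl fun j _ => ?_
  simp only [PiLp.smul_apply, smul_eq_mul]
  ring

/-- The defining set for `energy`. -/
def eset (g : EV N → Matrix (Fin N) (Fin N) ℝ) (x y : EV N) : Set ℝ :=
  { e : ℝ | ∃ γ : ℝ → EV N, ContDiffOn ℝ 1 γ (Icc (0:ℝ) 1) ∧ γ 0 = x ∧ γ 1 = y ∧
      e = ∫ t in (0:ℝ)..(1:ℝ), (1/4 : ℝ) * quadForm (g (γ t)) (deriv γ t) (deriv γ t) }

lemma energy_eq (g : EV N → Matrix (Fin N) (Fin N) ℝ) (x y : EV N) :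
    energy g x y = sInf (eset g x y) := rfl

lemma eset_nonempty (g : EV N → Matrix (Fin N) (Fin N) ℝ) (x y : EV N) :
    (eset g x y).Nonempty := by
  refine ⟨_, fun t : ℝ => x + t • (y - x), ?_, by simp, ?_, rfl⟩
  · exact (contDiff_const.add (contDiff_id.smul contDiff_const)).contDiffOn
  · show x + (1:ℝ) • (y - x) = y
    module

lemma eset_bddBelow {g : EV N → Matrix (Fin N) (Fin N) ℝ} {C : ℝ}
    (hell : UniformlyElliptic g C) (x y : EV N) : BddBelow (eset g x y) := by
  refine ⟨0, fun e he => ?_⟩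
  obtain ⟨γ, hγ, h0, h1, rfl⟩ := he
  refine intervalIntegral.integral_nonneg (by norm_num) fun u _ => ?_
  have := quadForm_nonneg hell (γ u) (deriv γ u)
  linarith

lemma gradient_const_mul {F : Type*} [NormedAddCommGroup F] [InnerProductSpace ℝ F] [CompleteSpace F]
    {f : F → ℝ} {x : F} (hf : DifferentiableAt ℝ f x) (c : ℝ) :
    gradient (fun z => c * f z) x = c • gradient f x := by
  unfold gradient
  rw [fderiv_const_mul hf c]
  simp

lemma continuous_quadForm_comp {α : Type*} [TopologicalSpace α]
    {g : EV N → Matrix (Fin N) (Fin N) ℝ} (hgc : ∀ i j, Continuous fun x => g x i j)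
    {z a b : α → EV N} (hz : Continuous z) (ha : Continuous a) (hb : Continuous b) :
    Continuous fun q => quadForm (g (z q)) (a q) (b q) := by
  unfold quadForm
  refine continuous_finset_sum _ fun i _ => continuous_finset_sum _ fun j _ => ?_
  exact (((hgc i j).comp hz).mul ((EuclideanSpace.proj i).continuous.comp ha)).mul
    ((EuclideanSpace.proj j).continuous.comp hb)

lemma energy_usc {g : EV N → Matrix (Fin N) (Fin N) ℝ}
    (hgc : ∀ i j, Continuous fun x => g x i j) {C : ℝ}
    (hell : UniformlyElliptic g C) (x y : EV N) {r : ℝ}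
    (hr : energy g x y < r) :
    ∀ᶠ p : EV N × EV N in nhds (x, y), energy g p.1 p.2 < r := by
  obtain ⟨e, ⟨γc, hγ, h0, h1, he⟩, her⟩ :=
    exists_lt_of_csInf_lt (eset_nonempty g x y) hr
  set pr : ℝ → ℝ := fun t => min (max t 0) 1 with hpr
  have pr_cont : Continuous pr := (continuous_id.max continuous_const).min continuous_const
  have pr_mem : ∀ t, pr t ∈ Icc (0:ℝ) 1 := fun t =>
    ⟨le_min (le_max_right _ _) zero_le_one, min_le_right _ _⟩
  have pr_eq : ∀ t ∈ Icc (0:ℝ) 1, pr t = t := fun t ht => by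
    simp [hpr, max_eq_left ht.1, min_eq_left ht.2]
  set v : ℝ → EV N := fun t => derivWithin γc (Icc (0:ℝ) 1) t with hv
  have v_cont : ContinuousOn v (Icc 0 1) :=
    hγ.continuousOn_derivWithin (uniqueDiffOn_Icc one_pos) le_rfl
  set γe : ℝ → EV N := fun t => γc (pr t) with hγe
  set ve : ℝ → EV N := fun t => v (pr t) with hve
  have γe_cont : Continuous γe := hγ.continuousOn.comp_continuous pr_cont pr_mem
  have ve_cont : Continuous ve := v_cont.comp_continuous pr_cont pr_mem
  have key : ∀ t ∈ Ioo (0:ℝ) 1, HasDerivAt γc (v t) t := by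
    intro t ht
    have hmem : Icc (0:ℝ) 1 ∈ nhds t := Icc_mem_nhds ht.1 ht.2
    have hd : DifferentiableWithinAt ℝ γc (Icc (0:ℝ) 1) t :=
      (hγ.differentiableOn one_ne_zero) t (Ioo_subset_Icc_self ht)
    have hda := hd.differentiableAt hmem
    have hvt : v t = deriv γc t := derivWithin_of_mem_nhds hmem
    rw [hvt]; exact hda.hasDerivAt
  set Φc : (EV N × EV N) → ℝ := fun p => ∫ t in (0:ℝ)..1,
      (1/4 : ℝ) * quadForm (g (γe t + (1 - t) • (p.1 - x) + t • (p.2 - y)))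
        (ve t + ((p.2 - y) - (p.1 - x))) (ve t + ((p.2 - y) - (p.1 - x))) with hΦc
  have Φc_cont : Continuous Φc := by
    rw [hΦc]
    refine intervalIntegral.continuous_parametric_intervalIntegral_of_continuous' ?_ 0 1
    have hz : Continuous fun q : (EV N × EV N) × ℝ =>
        γe q.2 + (1 - q.2) • (q.1.1 - x) + q.2 • (q.1.2 - y) :=
      ((γe_cont.comp continuous_snd).add
        ((continuous_const.sub continuous_snd).smul
          ((continuous_fst.fst).sub continuous_const))).add
        (continuous_snd.smul ((continuous_fst.snd).sub continuous_const))
    have hw : Continuous fun q : (EV N × EV N) × ℝ =>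
        ve q.2 + ((q.1.2 - y) - (q.1.1 - x)) :=
      (ve_cont.comp continuous_snd).add
        (((continuous_fst.snd).sub continuous_const).sub
          ((continuous_fst.fst).sub continuous_const))
    exact continuous_const.mul (continuous_quadForm_comp hgc hz hw hw)
  have hae : ∀ᵐ t : ℝ, t ∈ Set.uIoc (0:ℝ) 1 → t ∈ Ioo (0:ℝ) 1 := by
    have hone : {a : ℝ | ¬ a ≠ 1} = {1} := by ext a; simp
    have h1 : ∀ᵐ t : ℝ, t ≠ (1:ℝ) := by
      rw [ae_iff, hone]; exact measure_singleton 1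
    filter_upwards [h1] with t hne hmem
    rw [uIoc_of_le (by norm_num : (0:ℝ) ≤ 1)] at hmem
    exact ⟨hmem.1, lt_of_le_of_ne hmem.2 hne⟩
  have hbound : ∀ p : EV N × EV N, energy g p.1 p.2 ≤ Φc p := by
    intro p
    set γp : ℝ → EV N := fun t => γc t + (1 - t) • (p.1 - x) + t • (p.2 - y) with hγp
    have hmem : (∫ t in (0:ℝ)..1, (1/4:ℝ) * quadForm (g (γp t)) (deriv γp t) (deriv γp t))
        ∈ eset g p.1 p.2 := by
      refine ⟨γp, ?_, ?_, ?_, rfl⟩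
      · exact (hγ.add (((contDiff_const.sub contDiff_id).smul contDiff_const).contDiffOn)).add
          ((contDiff_id.smul contDiff_const).contDiffOn)
      · show γc 0 + ((1:ℝ) - 0) • (p.1 - x) + (0:ℝ) • (p.2 - y) = p.1
        rw [h0]; module
      · show γc 1 + ((1:ℝ) - 1) • (p.1 - x) + (1:ℝ) • (p.2 - y) = p.2
        rw [h1]; module
    have hle := csInf_le (eset_bddBelow hell p.1 p.2) hmem
    refine le_trans hle (le_of_eq ?_)
    refine intervalIntegral.integral_congr_ae ?_
    filter_upwards [hae] with t hmem' hti
    have ht := hmem' hti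
    have htI : t ∈ Icc (0:ℝ) 1 := Ioo_subset_Icc_self ht
    have e1 : γe t = γc t := by rw [hγe]; simp only [pr_eq t htI]
    have e2 : ve t = v t := by rw [hve]; simp only [pr_eq t htI]
    have hdp : HasDerivAt γp (v t + ((p.2 - y) - (p.1 - x))) t := by
      have hd1 := key t ht
      have hd2 : HasDerivAt (fun τ : ℝ => (1 - τ) • (p.1 - x)) ((-1 : ℝ) • (p.1 - x)) t :=
        ((hasDerivAt_id t).const_sub 1).smul_const _
      have hd3 : HasDerivAt (fun τ : ℝ => τ • (p.2 - y)) ((1 : ℝ) • (p.2 - y)) t :=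
        (hasDerivAt_id t).smul_const _
      have := (hd1.add hd2).add hd3
      refine this.congr_deriv ?_; symm
      module
    have e3 : deriv γp t = v t + ((p.2 - y) - (p.1 - x)) := hdp.deriv
    rw [e3]
    rw [hγp]
    simp only [e1, e2]
  have hval : Φc (x, y) = e := by
    rw [he, hΦc]
    refine intervalIntegral.integral_congr_ae ?_
    filter_upwards [hae] with t hmem' hti
    have ht := hmem' hti
    have htI : t ∈ Icc (0:ℝ) 1 := Ioo_subset_Icc_self ht
    have e1 : γe t = γc t := by rw [hγe]; simp only [pr_eq t htI]
    have e2 : ve t = v t := by rw [hve]; simp only [pr_eq t htI]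
    have e3 : deriv γc t = v t := (key t ht).deriv.symm ▸ rfl
    have e3' : deriv γc t = v t := ((key t ht).deriv)
    simp only [sub_self, smul_zero, add_zero, sub_zero, e1, e2, e3']
  have hev : ∀ᶠ p in nhds (x, y), Φc p < r :=
    (Φc_cont.continuousAt).eventually_lt continuousAt_const (by rw [hval]; exact her)
  filter_upwards [hev] with p hp
  exact lt_of_le_of_lt (hbound p) hp

lemma S_isOpen {g : EV N → Matrix (Fin N) (Fin N) ℝ}
    (hgc : ∀ i j, Continuous fun x => g x i j) {C : ℝ} (hell : UniformlyElliptic g C)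
    {Υ : ℝ} (hΥ : 0 < Υ) :
    IsOpen {p : EV N × EV N | dg g p.1 p.2 < Υ} := by
  rw [isOpen_iff_mem_nhds]
  rintro ⟨x, y⟩ hp
  have h1 : energy g x y < Υ ^ 2 := (Real.sqrt_lt' hΥ).1 hp
  exact (energy_usc hgc hell x y h1).mono fun p hp' => (Real.sqrt_lt' hΥ).2 hp'

end Aux

/-- Lemma 3 of the paper: `Φ^{λ,γ}` is well defined and, on the strip
`{d_g < Υ}`, a classical solution of
`∂ₜw − γw − (g⁻¹(x)D_xw, D_xw) ξ̇ + (g⁻¹(y)D_yw, D_yw) ζ̇ = 0`. -/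
theorem stmt6
    {N : ℕ} (hN : 1 ≤ N)
    (g : EV N → Matrix (Fin N) (Fin N) ℝ)
    (hgsymm : ∀ x, (g x).IsSymm)
    (hgC2 : ∀ i j, ContDiff ℝ 2 (fun x => g x i j))
    (C : ℝ) (hell : UniformlyElliptic g C)
    (Υ : ℝ) (hΥ : 0 < Υ)
    (hINJ : ContDiffOn ℝ 1 (fun p : EV N × EV N => energy g p.1 p.2)
      {p : EV N × EV N | dg g p.1 p.2 < Υ})
    (heik : ∀ x y : EV N, dg g x y < Υ →
      quadForm (ginv g x) (gradient (fun x' => energy g x' y) x)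
          (gradient (fun x' => energy g x' y) x) = energy g x y ∧
      quadForm (ginv g y) (gradient (fun y' => energy g x y') y)
          (gradient (fun y' => energy g x y') y) = energy g x y)
    (T : ℝ) (hT : 0 < T) (lam : ℝ) (hlam : 0 < lam) (γ : ℝ) (hγ : 0 ≤ γ)
    (ξ ζ : ℝ → ℝ) (hξ : ContDiff ℝ 1 ξ) (hζ : ContDiff ℝ 1 ζ)
    (hξ0 : ξ 0 = 0) (hζ0 : ζ 0 = 0)
    (hlamΔ : lam * DeltaGammaPlus ξ ζ γ T < 1) :
    -- well-definedness: the denominator is positive on [0,T]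
    (∀ t ∈ Icc (0:ℝ) T,
      0 < 1 - lam * ∫ s in (0:ℝ)..t, Real.exp (γ * s) * (deriv ξ s - deriv ζ s)) ∧
    -- classical solution on the strip
    (∀ (x y : EV N), dg g x y < Υ → ∀ t ∈ Icc (0:ℝ) T,
      HasDerivAt (fun τ => PhiLG g ξ ζ lam γ x y τ)
        (γ * PhiLG g ξ ζ lam γ x y t
          + quadForm (ginv g x) (gradient (fun x' => PhiLG g ξ ζ lam γ x' y t) x)
              (gradient (fun x' => PhiLG g ξ ζ lam γ x' y t) x) * deriv ξ t
          - quadForm (ginv g y) (gradient (fun y' => PhiLG g ξ ζ lam γ x y' t) y)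
              (gradient (fun y' => PhiLG g ξ ζ lam γ x y' t) y) * deriv ζ t) t ∧
      DifferentiableAt ℝ (fun x' => PhiLG g ξ ζ lam γ x' y t) x ∧
      DifferentiableAt ℝ (fun y' => PhiLG g ξ ζ lam γ x y' t) y) := by
  have hcont : Continuous fun s => Real.exp (γ * s) * (deriv ξ s - deriv ζ s) :=
    (Real.continuous_exp.comp (continuous_const.mul continuous_id)).mul
      ((hξ.continuous_deriv le_rfl).sub (hζ.continuous_deriv le_rfl))
  have Fcont : Continuous fun t => ∫ s in (0:ℝ)..t, Real.exp (γ * s) * (deriv ξ s - deriv ζ s) :=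
    intervalIntegral.continuous_primitive (fun a b => hcont.intervalIntegrable a b) 0
  have hden : ∀ t ∈ Icc (0:ℝ) T,
      0 < 1 - lam * ∫ s in (0:ℝ)..t, Real.exp (γ * s) * (deriv ξ s - deriv ζ s) := by
    intro t ht
    have hmem : (∫ s in (0:ℝ)..t, Real.exp (γ * s) * (deriv ξ s - deriv ζ s)) ∈
        ((fun t => ∫ s in (0:ℝ)..t, Real.exp (γ * s) * (deriv ξ s - deriv ζ s)) '' Icc (0:ℝ) T) :=
      mem_image_of_mem _ ht
    have hbdd : BddAbove ((fun t => ∫ s in (0:ℝ)..t,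
        Real.exp (γ * s) * (deriv ξ s - deriv ζ s)) '' Icc (0:ℝ) T) :=
      (isCompact_Icc.image Fcont).bddAbove
    have hle : (∫ s in (0:ℝ)..t, Real.exp (γ * s) * (deriv ξ s - deriv ζ s)) ≤
        DeltaGammaPlus ξ ζ γ T := le_csSup hbdd hmem
    have := mul_le_mul_of_nonneg_left hle hlam.le
    linarith
  refine ⟨hden, ?_⟩
  intro x y hxy t ht
  have hD := hden t ht
  set D : ℝ := 1 - lam * ∫ s in (0:ℝ)..t, Real.exp (γ * s) * (deriv ξ s - deriv ζ s) with hDdef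
  set c : ℝ := lam * Real.exp (γ * t) / D with hcdef
  have hgc : ∀ i j, Continuous fun x => g x i j := fun i j => (hgC2 i j).continuous
  have Sopen := S_isOpen hgc hell hΥ
  have hdiffE : DifferentiableAt ℝ (fun p : EV N × EV N => energy g p.1 p.2) (x, y) :=
    ((hINJ.differentiableOn one_ne_zero) (x, y) hxy).differentiableAt (Sopen.mem_nhds hxy)
  have hEx : DifferentiableAt ℝ (fun x' => energy g x' y) x := by
    have h := hdiffE.comp x (((differentiableAt_id (x := x)).prodMk (differentiableAt_const y) :
      DifferentiableAt ℝ (fun x' : EV N => (x', y)) x))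
    exact h
  have hEy : DifferentiableAt ℝ (fun y' => energy g x y') y := by
    have h := hdiffE.comp y ((differentiableAt_const x).prodMk (differentiableAt_id))
    exact h
  have hslicex : (fun x' => PhiLG g ξ ζ lam γ x' y t) = fun x' => c * energy g x' y := by
    funext x'
    rw [PhiLG, hcdef, hDdef]
    ring
  have hslicey : (fun y' => PhiLG g ξ ζ lam γ x y' t) = fun y' => c * energy g x y' := by
    funext y'
    rw [PhiLG, hcdef, hDdef]
    ring
  have hGx : gradient (fun x' => PhiLG g ξ ζ lam γ x' y t) x
      = c • gradient (fun x' => energy g x' y) x := by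
    rw [hslicex]; exact gradient_const_mul hEx c
  have hGy : gradient (fun y' => PhiLG g ξ ζ lam γ x y' t) y
      = c • gradient (fun y' => energy g x y') y := by
    rw [hslicey]; exact gradient_const_mul hEy c
  have hQx : quadForm (ginv g x) (gradient (fun x' => PhiLG g ξ ζ lam γ x' y t) x)
      (gradient (fun x' => PhiLG g ξ ζ lam γ x' y t) x) = c^2 * energy g x y := by
    rw [hGx, quadForm_smul, (heik x y hxy).1]
  have hQy : quadForm (ginv g y) (gradient (fun y' => PhiLG g ξ ζ lam γ x y' t) y)
      (gradient (fun y' => PhiLG g ξ ζ lam γ x y' t) y) = c^2 * energy g x y := by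
    rw [hGy, quadForm_smul, (heik x y hxy).2]
  refine ⟨?_, ?_, ?_⟩
  · rw [hQx, hQy]
    have hu : HasDerivAt (fun τ => lam * Real.exp (γ * τ) * energy g x y)
        (γ * Real.exp (γ * t) * lam * energy g x y) t := by
      have h1 : HasDerivAt (fun τ : ℝ => γ * τ) γ t := by
        simpa using (hasDerivAt_id t).const_mul γ
      have h2 : HasDerivAt (fun τ => Real.exp (γ * τ)) (Real.exp (γ * t) * γ) t :=
        (Real.hasDerivAt_exp (γ * t)).comp t h1
      have h3 := (h2.const_mul lam).mul_const (energy g x y)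
      refine h3.congr_deriv ?_; symm
      ring
    have hw : HasDerivAt
        (fun τ => 1 - lam * ∫ s in (0:ℝ)..τ, Real.exp (γ * s) * (deriv ξ s - deriv ζ s))
        (-(lam * (Real.exp (γ * t) * (deriv ξ t - deriv ζ t)))) t := by
      have hint : HasDerivAt (fun τ => ∫ s in (0:ℝ)..τ, Real.exp (γ * s) * (deriv ξ s - deriv ζ s))
          (Real.exp (γ * t) * (deriv ξ t - deriv ζ t)) t :=
        intervalIntegral.integral_hasDerivAt_right (hcont.intervalIntegrable 0 t)
          (hcont.stronglyMeasurableAtFilter _ _) hcont.continuousAt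
      exact (hint.const_mul lam).const_sub 1
    have hq := hu.div hw (by rw [← hDdef]; exact hD.ne')
    have hfun : (fun τ => PhiLG g ξ ζ lam γ x y τ)
        = fun τ => (lam * Real.exp (γ * τ) * energy g x y) /
            (1 - lam * ∫ s in (0:ℝ)..τ, Real.exp (γ * s) * (deriv ξ s - deriv ζ s)) := by
      funext τ; rw [PhiLG]
    rw [hfun]
    refine hq.congr_deriv ?_; symm
    rw [PhiLG, hcdef, hDdef]
    have hDne : (1 - lam * ∫ s in (0:ℝ)..t, Real.exp (γ * s) * (deriv ξ s - deriv ζ s)) ≠ 0 := by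
      rw [← hDdef]; exact hD.ne'
    field_simp
    ring
  · rw [hslicex]; exact hEx.const_mul c
  · rw [hslicey]; exact hEy.const_mul c
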